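/- Composing the two lemmas about the addition network: with c₀ = 0 and c_{i+1} = ⌊(bit_i(n) + bit_i(m) + c_i)/2⌋, setting v_i = bit_i(n) + bit_i(m) + c_i, the output o_i = ((v_i − 1)² − 1)² satisfies: o_i = 0 when bit_i(n+m) = 0, and o_i ≥ 1 when bit_i(n+m) = 1. Hence the network computes binary addition exactly for all pairs of natural numbers. -/

import Mathlib

def bit (i x : ℕ) : ℕ := x / 2 ^ i % 2

def carry (n m : ℕ) : ℕ → ℕ
  | 0 => 0
  | i + 1 => (bit i n + bit i m + carry n m i) / 2

lemma carry_eq (n m i : ℕ) : carry n m i = (n % 2 ^ i + m % 2 ^ i) / 2 ^ i := by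
  induction i with
  | zero => simp [carry, Nat.mod_one]
  | succ i ih =>
    have hp : 0 < 2 ^ i := Nat.pow_pos (by norm_num)
    have hn : n % 2 ^ (i + 1) = 2 ^ i * (bit i n) + n % 2 ^ i := by
      rw [pow_succ, Nat.mod_mul, bit]; ring
    have hm : m % 2 ^ (i + 1) = 2 ^ i * (bit i m) + m % 2 ^ i := by
      rw [pow_succ, Nat.mod_mul, bit]; ring
    rw [carry, ih, hn, hm]
    have : 2 ^ i * bit i n + n % 2 ^ i + (2 ^ i * bit i m + m % 2 ^ i)
        = 2 ^ i * (bit i n + bit i m) + (n % 2 ^ i + m % 2 ^ i) := by ring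
    rw [this, pow_succ, ← Nat.div_div_eq_div_mul, Nat.mul_add_div hp]

lemma bit_add (n m i : ℕ) :
    bit i (n + m) = (bit i n + bit i m + carry n m i) % 2 := by
  have hp : 0 < 2 ^ i := Nat.pow_pos (by norm_num)
  have h1 : n + m = 2 ^ i * (n / 2 ^ i + m / 2 ^ i) + (n % 2 ^ i + m % 2 ^ i) := by
    have h1 := Nat.div_add_mod n (2 ^ i)
    have h2 := Nat.div_add_mod m (2 ^ i)
    have h3 : 2 ^ i * (n / 2 ^ i + m / 2 ^ i)
        = 2 ^ i * (n / 2 ^ i) + 2 ^ i * (m / 2 ^ i) := by ring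
    omega
  have h2 : (n + m) / 2 ^ i = n / 2 ^ i + m / 2 ^ i + carry n m i := by
    rw [carry_eq, h1, Nat.mul_add_div hp]
  unfold bit
  rw [h2]
  omega

lemma carry_le (n m i : ℕ) : carry n m i ≤ 1 := by
  induction i with
  | zero => simp [carry]
  | succ i ih =>
    have hn : bit i n ≤ 1 := Nat.lt_succ_iff.mp (Nat.mod_lt _ (by norm_num))
    have hm : bit i m ≤ 1 := Nat.lt_succ_iff.mp (Nat.mod_lt _ (by norm_num))
    rw [carry]
    omega

/-- The network's output `o_i = ((v_i − 1)² − 1)²`, where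
`v_i = bit_i n + bit_i m + c_i`, is 0 exactly when the i-th digit of `n + m`
is 0, and is at least 1 when that digit is 1: the network computes binary
addition exactly for all pairs of natural numbers. -/
theorem addition_network_correct (n m i : ℕ) :
    (bit i (n + m) = 0 →
      (((bit i n + bit i m + carry n m i : ℤ) - 1) ^ 2 - 1) ^ 2 = 0) ∧
    (bit i (n + m) = 1 →
      1 ≤ (((bit i n + bit i m + carry n m i : ℤ) - 1) ^ 2 - 1) ^ 2) := by
  have hb := bit_add n m i
  have hn : bit i n ≤ 1 := Nat.lt_succ_iff.mp (Nat.mod_lt _ (by norm_num))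
  have hm : bit i m ≤ 1 := Nat.lt_succ_iff.mp (Nat.mod_lt _ (by norm_num))
  have hc := carry_le n m i
  constructor
  · intro h0
    have h : bit i n + bit i m + carry n m i = 0 ∨
        bit i n + bit i m + carry n m i = 2 := by omega
    rcases h with h | h <;>
      · have h' : (bit i n : ℤ) + bit i m + carry n m i =
            ((bit i n + bit i m + carry n m i : ℕ) : ℤ) := by push_cast; ring
        rw [h', h]; norm_num
  · intro h1
    have h : bit i n + bit i m + carry n m i = 1 ∨
        bit i n + bit i m + carry n m i = 3 := by omega
    rcases h with h | h <;>
      · have h' : (bit i n : ℤ) + bit i m + carry n m i =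
            ((bit i n + bit i m + carry n m i : ℕ) : ℤ) := by push_cast; ring
        rw [h', h]; norm_num
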